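/- arXiv:0801.0209 — 2 statements merged into one kernel-verified Lean document; each statement's English description precedes it below -/
import Mathlib

section
/- Let X be a computable metric space with ideal points (s_i)_{i∈ℕ}, T:X→X a continuous map, and Y⊆X. Then the dimension-like topological entropy satisfies h_2(T,Y) = inf{s ≥ 0 : Y has a null s-cover}. -/
open MeasureTheory Filter Set Metric Topology
open scoped ENNReal NNReal

noncomputable section

/-- Decoding of rational numbers from natural number codes (a standard numbering of `ℚ`). -/
def ratOf (n : ℕ) : ℚ := (Encodable.decode (α := ℚ) n).getD 0

/-- Decoding of finite lists of naturals from natural number codes. -/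
def listOf (n : ℕ) : List ℕ := (Encodable.decode (α := List ℕ) n).getD []

/-- A set of codes is recursively enumerable (semi-decidable): the domain of a partial
recursive function. -/
def REset {α : Type*} [Primcodable α] (E : Set α) : Prop :=
  Partrec fun a => Part.assert (a ∈ E) fun _ => Part.some 0

/-- A computable metric space structure: a dense sequence of ideal points whose mutual
distances are computable, uniformly. -/
structure CMS (X : Type*) [MetricSpace X] where
  s : ℕ → X
  dense : DenseRange s
  distComp : ∃ g : ℕ → ℕ, Computable g ∧ ∀ i j k : ℕ,
    |(ratOf (g (Nat.pair (Nat.pair i j) k)) : ℝ) - dist (s i) (s j)| < (2:ℝ)^(-(k:ℤ))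

variable {X : Type*} [MetricSpace X]

/-- The ideal ball with code `c = ⟨i, j⟩`: the open ball centered at the ideal point `s i`
with rational radius coded by `j`. -/
def CMS.idealBall (M : CMS X) (c : ℕ) : Set X :=
  Metric.ball (M.s c.unpair.1) ((ratOf c.unpair.2 : ℝ))

/-- A recursively enumerable open set: a union of ideal balls indexed by an r.e. set. -/
def REopen (M : CMS X) (U : Set X) : Prop :=
  ∃ E : Set ℕ, REset E ∧ U = ⋃ c ∈ E, M.idealBall c

/-- A uniformly r.e. sequence of open sets. -/
def UREopen (M : CMS X) (U : ℕ → Set X) : Prop :=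
  ∃ E : Set ℕ, REset E ∧ ∀ n, U n = ⋃ c ∈ {c | Nat.pair n c ∈ E}, M.idealBall c

/-- A constructive `Gδ`-set: intersection of a uniformly r.e. sequence of open sets. -/
def ConstructiveGdelta (M : CMS X) (D : Set X) : Prop :=
  ∃ U : ℕ → Set X, UREopen M U ∧ D = ⋂ n, U n

variable [MeasurableSpace X]

/-- A computable (Borel probability) measure: the measures of finite unions of ideal balls
are uniformly lower semi-computable. -/
def ComputableMeasure (M : CMS X) (μ : Measure X) : Prop :=
  ∃ E : Set ℕ, REset E ∧ ∀ l q : ℕ,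
    (Nat.pair l q ∈ E ↔ (ratOf q : ℝ) < (μ (⋃ c ∈ listOf l, M.idealBall c)).toReal)

/-- A Martin-Löf test: a uniformly r.e. sequence of open sets with `μ (U n) < 2^{-n}`. -/
def MLTest (M : CMS X) (μ : Measure X) (U : ℕ → Set X) : Prop :=
  UREopen M U ∧ ∀ n, μ (U n) < ENNReal.ofReal ((2:ℝ)^(-(n:ℤ)))

/-- A Martin-Löf random point: a point not contained in any effective null set. -/
def MLRandom (M : CMS X) (μ : Measure X) (x : X) : Prop :=
  ∀ U : ℕ → Set X, MLTest M μ U → x ∉ ⋂ n, U n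

/-- `T` is computable on the set `D`: preimages of ideal balls are, on `D`, uniformly
r.e. open sets. -/
def ComputableOn (M : CMS X) (T : X → X) (D : Set X) : Prop :=
  ∃ U : ℕ → Set X, UREopen M U ∧ ∀ n, T ⁻¹' (M.idealBall n) ∩ D = U n ∩ D

/-- An (everywhere) computable map: preimages of ideal balls are uniformly r.e. open. -/
def ComputableMap (M : CMS X) (T : X → X) : Prop :=
  ∃ U : ℕ → Set X, UREopen M U ∧ ∀ n, T ⁻¹' (M.idealBall n) = U n

/-- An endomorphism of a computable probability space: a measure-preserving map computable
on a constructive `Gδ`-set of measure one. -/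
def IsEndo (M : CMS X) (μ : Measure X) (T : X → X) : Prop :=
  MeasurePreserving T μ μ ∧
    ∃ D : Set X, ConstructiveGdelta M D ∧ μ D = 1 ∧ ComputableOn M T D

/-- An almost decidable set. -/
def AlmostDecidable (M : CMS X) (μ : Measure X) (A : Set X) : Prop :=
  ∃ U V : Set X, REopen M U ∧ REopen M V ∧ U ⊆ A ∧ V ⊆ Aᶜ ∧ μ U + μ V = 1

/-- A prefix-free set of binary words. -/
def PrefixFree (D : Set (List Bool)) : Prop :=
  ∀ u ∈ D, ∀ v ∈ D, u <+: v → u = v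

/-- An interpreter: a partial recursive function on binary programs with prefix-free domain. -/
structure Interpreter where
  f : List Bool →. ℕ
  partrec : Partrec f
  prefixFree : PrefixFree {p | (f p).Dom}

/-- Prefix (self-delimiting) Kolmogorov complexity of `x` with respect to an interpreter. -/
def Interpreter.K (I : Interpreter) (x : ℕ) : ℕ :=
  sInf {m | ∃ p : List Bool, p.length = m ∧ x ∈ I.f p}

/-- A universal interpreter: additively optimal among all interpreters. -/
def Interpreter.Universal (U : Interpreter) : Prop :=
  ∀ I : Interpreter, ∃ c : ℕ, ∀ x : ℕ, (∃ p, x ∈ I.f p) → U.K x ≤ I.K x + c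

/-- A finite computable partition (with `k+1` atoms): pairwise disjoint r.e. open sets
whose union has measure one. -/
structure CPartition (M : CMS X) (μ : Measure X) (k : ℕ) where
  p : Fin (k+1) → Set X
  re : ∀ a, REopen M (p a)
  disj : ∀ a b, a ≠ b → Disjoint (p a) (p b)
  full : μ (⋃ a, p a) = 1

/-- A finite measurable partition (with `k+1` atoms). -/
structure MPartition {Y : Type*} [MeasurableSpace Y] (μ : Measure Y) (k : ℕ) where
  p : Fin (k+1) → Set Y
  meas : ∀ a, MeasurableSet (p a)
  disj : ∀ a b, a ≠ b → Disjoint (p a) (p b)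
  full : μ (⋃ a, p a) = 1

open Classical in
/-- The symbol at time `j` of the symbolic orbit of `x` w.r.t. the partition `p`. -/
def symb (T : X → X) {k : ℕ} (p : Fin (k+1) → Set X) (x : X) (j : ℕ) : Fin (k+1) :=
  if h : ∃ a, T^[j] x ∈ p a then h.choose else 0

/-- The code of the length-`n` symbolic word of `x`: the atom `ξ_n(x)` viewed as a word. -/
def wcode (T : X → X) {k : ℕ} (p : Fin (k+1) → Set X) (x : X) (n : ℕ) : ℕ :=
  Encodable.encode (List.ofFn fun j : Fin n => symb T p x (j : ℕ))

/-- The atom `ξ_n(x)` of the refined partition `ξ ∨ T⁻¹ξ ∨ … ∨ T^{-(n-1)}ξ` containing `x`. -/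
def refCell (T : X → X) {k : ℕ} (p : Fin (k+1) → Set X) (n : ℕ) (x : X) : Set X :=
  {y | ∀ j < n, ∀ a, T^[j] x ∈ p a → T^[j] y ∈ p a}

/-- `-(t * log₂ t)`, the summand of Shannon entropy (with the convention `0 log 0 = 0`). -/
def ent2 (t : ℝ) : ℝ := -(t * Real.logb 2 t)

/-- Shannon entropy `H_μ(ξ_n)` of the refined partition `ξ_n = ξ ∨ … ∨ T^{-(n-1)}ξ`. -/
def Hent (μ : Measure X) (T : X → X) {k : ℕ} (p : Fin (k+1) → Set X) (n : ℕ) : ℝ :=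
  ∑ w : Fin n → Fin (k+1), ent2 ((μ {y | ∀ j : Fin n, T^[(j:ℕ)] y ∈ p (w j)}).toReal)

/-- The entropy `h_μ(T,ξ) = lim_n H_μ(ξ_n)/n` of `T` relative to the partition `ξ`;
by subadditivity (Fekete's lemma) the limit equals the infimum. -/
def hPart (μ : Measure X) (T : X → X) {k : ℕ} (p : Fin (k+1) → Set X) : ℝ :=
  ⨅ n : ℕ, Hent μ T p (n+1) / (n+1)

/-- The Kolmogorov-Sinai entropy: supremum of `h_μ(T,ξ)` over finite measurable partitions. -/
def KSentropy (μ : Measure X) (T : X → X) : ℝ≥0∞ :=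
  ⨆ (k : ℕ) (ξ : MPartition μ k), ENNReal.ofReal (hPart μ T ξ.p)

/-- Symbolic orbit complexity relative to a partition: `limsup_n K(ξ_n(x))/n`. -/
def KsymPart (U : Interpreter) (T : X → X) {k : ℕ} (p : Fin (k+1) → Set X) (x : X) : ℝ≥0∞ :=
  Filter.limsup (fun n : ℕ => (U.K (wcode T p x n) : ℝ≥0∞) / (n : ℝ≥0∞)) atTop

/-- Symbolic orbit complexity: supremum over all finite computable partitions. -/
def Ksym (M : CMS X) (μ : Measure X) (U : Interpreter) (T : X → X) (x : X) : ℝ≥0∞ :=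
  ⨆ (k : ℕ) (ξ : CPartition M μ k), KsymPart U T ξ.p x

/-- `K_n(x,T,ε)`: the minimal complexity of a list of (codes of) ideal points which
`ε`-shadows the first `n` iterates of `x`. -/
def KnOrb (M : CMS X) (U : Interpreter) (T : X → X) (x : X) (ε : ℝ) (n : ℕ) : ℕ :=
  sInf {m | ∃ l : List ℕ, l.length = n ∧
    (∀ j < n, dist (M.s (l.getD j 0)) (T^[j] x) < ε) ∧ U.K (Encodable.encode l) = m}

/-- Upper orbit complexity `uK(x,T) = lim_{ε→0⁺} limsup_n K_n(x,T,ε)/n`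
(the limit is a supremum by monotonicity). -/
def uK (M : CMS X) (U : Interpreter) (T : X → X) (x : X) : ℝ≥0∞ :=
  ⨆ (ε : ℝ) (_ : 0 < ε),
    Filter.limsup (fun n : ℕ => (KnOrb M U T x ε n : ℝ≥0∞) / (n : ℝ≥0∞)) atTop

/-- Lower orbit complexity `lK(x,T) = lim_{ε→0⁺} liminf_n K_n(x,T,ε)/n`. -/
def lK (M : CMS X) (U : Interpreter) (T : X → X) (x : X) : ℝ≥0∞ :=
  ⨆ (ε : ℝ) (_ : 0 < ε),
    Filter.liminf (fun n : ℕ => (KnOrb M U T x ε n : ℝ≥0∞) / (n : ℝ≥0∞)) atTop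

/-- The Bowen ball `B_n(x,ε)`. -/
def BowenBall (T : X → X) (x : X) (n : ℕ) (ε : ℝ) : Set X :=
  {y | ∀ i < n, dist (T^[i] x) (T^[i] y) < ε}

/-- The `ε`-size of a set: `2^{-s}` where `s = sup{n : diam(TⁱE) ≤ ε for all i < n}`. -/
def esize (T : X → X) (ε : ℝ) (E : Set X) : ℝ≥0∞ :=
  ⨅ (n : ℕ) (_ : ∀ i < n, EMetric.diam (T^[i] '' E) ≤ ENNReal.ofReal ε), (2:ℝ≥0∞)^(-(n:ℤ))

/-- The outer quantity `m^s_δ(Y,ε)`: infimum over countable open covers of `Y` by sets of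
`ε`-size `< δ` of the sum of the `s`-powers of the `ε`-sizes. -/
def mSD (T : X → X) (Y : Set X) (s ε δ : ℝ) : ℝ≥0∞ :=
  ⨅ (G : ℕ → Set X) (_ : (∀ n, IsOpen (G n)) ∧ (∀ n, esize T ε (G n) < ENNReal.ofReal δ) ∧
      Y ⊆ ⋃ n, G n),
    ∑' n : ℕ, (esize T ε (G n)) ^ s

/-- `m^s(Y,ε) = lim_{δ→0⁺} m^s_δ(Y,ε)` (an increasing limit, hence a supremum). -/
def mS (T : X → X) (Y : Set X) (s ε : ℝ) : ℝ≥0∞ :=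
  ⨆ (δ : ℝ) (_ : 0 < δ), mSD T Y s ε δ

/-- The dimension-like topological entropy `h₂(T,Y)`: the limit as `ε → 0⁺` (a supremum)
of the critical exponents `h₂(T,Y,ε) = inf{s ≥ 0 : m^s(Y,ε) = 0}`. -/
def h2 (T : X → X) (Y : Set X) : ℝ≥0∞ :=
  ⨆ (ε : ℝ) (_ : 0 < ε), sInf {c : ℝ≥0∞ | ∃ s : ℝ≥0, c = (s : ℝ≥0∞) ∧ mS T Y (s:ℝ) ε = 0}

/-- `E ⊆ ℕ³` is a null `s`-cover of `Y`: `∑_{(i,n,p)∈E} 2^{-sn} < ∞` and for all `k,p` the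
Bowen balls `B_n(s_i, 2^{-p})` with `(i,n,p) ∈ E`, `n ≥ k` cover `Y`. -/
def NullSCover (M : CMS X) (T : X → X) (Y : Set X) (s : ℝ) (E : Set (ℕ × ℕ × ℕ)) : Prop :=
  (∑' e : E, (2:ℝ≥0∞) ^ (-(s * ((e : ℕ × ℕ × ℕ).2.1 : ℝ)))) ≠ ⊤ ∧
  ∀ k p : ℕ, Y ⊆ ⋃ e ∈ {e : ℕ × ℕ × ℕ | e ∈ E ∧ k ≤ e.2.1 ∧ e.2.2 = p},
    BowenBall T (M.s e.1) e.2.1 ((2:ℝ)^(-(p:ℤ)))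

/-- The effective topological entropy: the infimum of the `s ≥ 0` such that `Y` admits a
recursively enumerable null `s`-cover. -/
def h2eff (M : CMS X) (T : X → X) (Y : Set X) : ℝ≥0∞ :=
  sInf {c : ℝ≥0∞ | ∃ s : ℝ≥0, c = (s : ℝ≥0∞) ∧ ∃ E : Set (ℕ × ℕ × ℕ),
    REset E ∧ NullSCover M T Y (s:ℝ) E}

/-- `N(X,n,ε)`: minimal cardinality of a cover of `X` by Bowen balls `B_n(x,ε)`. -/
def Ncover (T : X → X) (n : ℕ) (ε : ℝ) : ℕ :=
  sInf {m | ∃ F : Finset X, F.card = m ∧ ∀ y : X, ∃ x ∈ F, y ∈ BowenBall T x n ε}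

/-- Bowen's topological entropy `h₁(T,X) = lim_{ε→0⁺} limsup_n (log₂ N(X,n,ε))/n`. -/
def h1 (T : X → X) : ℝ≥0∞ :=
  ⨆ (ε : ℝ) (_ : 0 < ε),
    Filter.limsup (fun n : ℕ => ENNReal.ofReal (Real.logb 2 (Ncover T n ε)) / (n : ℝ≥0∞)) atTop

/-- Cylinder of a finite word in the symbolic space `(Fin (k+1))^ℕ`. -/
def Cyl {k : ℕ} (w : List (Fin (k+1))) : Set (ℕ → Fin (k+1)) :=
  {ω | ∀ j < w.length, ω j = w.getD j 0}

/-- Decoding of finite words over the alphabet `{0,…,k}` from natural number codes. -/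
def wordOf (k m : ℕ) : List (Fin (k+1)) := (Encodable.decode (α := List (Fin (k+1))) m).getD []

end



noncomputable section Aux
variable {X : Type*} [MetricSpace X]

lemma two_zpow_eq (z : ℤ) : (2:ℝ≥0∞)^z = (2:ℝ≥0∞)^(z:ℝ) := (ENNReal.rpow_intCast 2 z).symm

lemma two_rpow_le {a b : ℝ} (h : a ≤ b) : (2:ℝ≥0∞)^a ≤ (2:ℝ≥0∞)^b :=
  ENNReal.rpow_le_rpow_of_exponent_le (by norm_num) h

lemma two_rpow_lt {a b : ℝ} (h : a < b) : (2:ℝ≥0∞)^a < (2:ℝ≥0∞)^b :=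
  ENNReal.rpow_lt_rpow_of_exponent_lt (by norm_num) (by norm_num) h

lemma two_rpow_pos (a : ℝ) : 0 < (2:ℝ≥0∞)^a := ENNReal.rpow_pos (by norm_num) (by norm_num)

lemma two_rpow_ne_top (a : ℝ) : (2:ℝ≥0∞)^a ≠ ⊤ := by
  intro h
  have := ENNReal.rpow_eq_top_iff.1 h
  rcases this with ⟨h1,_⟩|⟨h1,_⟩ <;> norm_num at h1

lemma two_rpow_ofReal (a : ℝ) : (2:ℝ≥0∞)^a = ENNReal.ofReal ((2:ℝ)^a) := by
  rw [show (2:ℝ≥0∞) = ENNReal.ofReal 2 by norm_num, ENNReal.ofReal_rpow_of_pos (by norm_num)]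

lemma two_rpow_lt_iff {a b : ℝ} : (2:ℝ≥0∞)^a < (2:ℝ≥0∞)^b ↔ a < b := by
  constructor
  · intro h; by_contra hc; exact absurd (two_rpow_le (not_lt.1 hc)) (not_le.2 h)
  · exact two_rpow_lt

lemma esize_le (T : X → X) (ε : ℝ) (E : Set X) {n : ℕ}
    (h : ∀ i < n, EMetric.diam (T^[i] '' E) ≤ ENNReal.ofReal ε) :
    esize T ε E ≤ (2:ℝ≥0∞)^(-(n:ℝ)) := by
  rw [← Int.cast_natCast (R := ℝ), ← Int.cast_neg, ← two_zpow_eq]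
  exact iInf₂_le n h

lemma esize_empty (T : X → X) (ε : ℝ) : esize T ε (∅ : Set X) = 0 := by
  refine le_antisymm ?_ (zero_le)
  refine ENNReal.le_of_forall_pos_le_add fun η hη _ => ?_
  obtain ⟨n, hn⟩ := ENNReal.exists_inv_two_pow_lt (a := (η:ℝ≥0∞)) (by exact_mod_cast hη.ne')
  have h1 : esize T ε (∅ : Set X) ≤ (2:ℝ≥0∞)^(-(n:ℝ)) :=
    esize_le T ε ∅ (by intro i _; simp only [Set.image_empty]; exact EMetric.diam_empty.le.trans zero_le)
  have h2 : (2:ℝ≥0∞)^(-(n:ℝ)) = 2⁻¹ ^ n := by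
    rw [← ENNReal.rpow_natCast 2⁻¹ n, ← ENNReal.rpow_neg_one,
      ← ENNReal.rpow_mul]
    norm_num
  calc esize T ε (∅ : Set X) ≤ (2:ℝ≥0∞)^(-(n:ℝ)) := h1
    _ = 2⁻¹ ^ n := h2
    _ ≤ η := hn.le
    _ ≤ 0 + η := by simp

lemma bowenBall_open {T : X → X} (hT : Continuous T) (x : X) (n : ℕ) (ε : ℝ) :
    IsOpen (BowenBall T x n ε) := by
  have : BowenBall T x n ε = ⋂ i ∈ Finset.range n, (T^[i]) ⁻¹' Metric.ball (T^[i] x) ε := by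
    ext y; simp [BowenBall, dist_comm]
  rw [this]
  exact isOpen_biInter_finset fun i _ => (Metric.isOpen_ball).preimage (hT.iterate i)

lemma esize_bowen {T : X → X} {x : X} {n : ℕ} {r ε : ℝ} (h : 2*r ≤ ε) :
    esize T ε (BowenBall T x n r) ≤ (2:ℝ≥0∞)^(-(n:ℝ)) := by
  refine esize_le T ε _ fun i hi => ?_
  refine EMetric.diam_le ?_
  rintro _ ⟨a, ha, rfl⟩ _ ⟨b, hb, rfl⟩
  rw [edist_dist]
  refine ENNReal.ofReal_le_ofReal ?_
  calc dist (T^[i] a) (T^[i] b) ≤ dist (T^[i] x) (T^[i] a) + dist (T^[i] x) (T^[i] b) :=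
        dist_triangle_left _ _ _
    _ ≤ r + r := by
        exact add_le_add (ha i hi).le (hb i hi).le
    _ ≤ ε := by linarith


lemma mS_eq_zero_of_cover (M : CMS X) (T : X → X) (hT : Continuous T) (Y : Set X)
    {s : ℝ} (hs : 0 ≤ s) {E : Set (ℕ × ℕ × ℕ)}
    (hsum : (∑' e : E, (2:ℝ≥0∞) ^ (-(s * ((e : ℕ × ℕ × ℕ).2.1 : ℝ)))) ≠ ⊤)
    (hcov : ∀ k p : ℕ, Y ⊆ ⋃ e ∈ {e : ℕ × ℕ × ℕ | e ∈ E ∧ k ≤ e.2.1 ∧ e.2.2 = p},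
      BowenBall T (M.s e.1) e.2.1 ((2:ℝ)^(-(p:ℤ))))
    {s' : ℝ} (hss' : s < s') {ε : ℝ} (hε : 0 < ε) : mS T Y s' ε = 0 := by
  classical
  have hs' : 0 < s' := lt_of_le_of_lt hs hss'
  rw [mS, ENNReal.iSup_eq_zero]
  intro δ
  rw [ENNReal.iSup_eq_zero]
  intro hδ
  -- choose p with 2 * 2^{-p} ≤ ε
  obtain ⟨p, hp⟩ : ∃ p : ℕ, 2 * (2:ℝ)^(-(p:ℤ)) ≤ ε := by
    obtain ⟨p, hp⟩ := exists_pow_lt_of_lt_one (div_pos hε two_pos) (by norm_num : (1/2:ℝ) < 1)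
    refine ⟨p, ?_⟩
    have : (2:ℝ)^(-(p:ℤ)) = (1/2)^p := by
      rw [zpow_neg, zpow_natCast, one_div, inv_pow]
    rw [this]
    linarith
  set S := (∑' e : E, (2:ℝ≥0∞) ^ (-(s * ((e : ℕ × ℕ × ℕ).2.1 : ℝ)))) with hS
  refine le_antisymm (ENNReal.le_of_forall_pos_le_add fun η hη _ => ?_) (zero_le)
  rw [zero_add]
  -- choose k
  have hr1 : ((2:ℝ≥0∞)^(-(s'-s))) < 1 := by
    have := two_rpow_lt (show -(s'-s) < 0 by linarith)
    simpa using this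
  have hr2 : ((2:ℝ≥0∞)^(-(1:ℝ))) < 1 := by
    have := two_rpow_lt (show -(1:ℝ) < 0 by norm_num)
    simpa using this
  have hten : Filter.Tendsto (fun k : ℕ => ((2:ℝ≥0∞)^(-(s'-s)))^k * S) Filter.atTop (nhds 0) := by
    have h0 := ENNReal.tendsto_pow_atTop_nhds_zero_of_lt_one hr1
    have := ENNReal.Tendsto.mul_const (b := S) h0 (Or.inr hsum)
    simpa using this
  have hten2 : Filter.Tendsto (fun k : ℕ => ((2:ℝ≥0∞)^(-(1:ℝ)))^k) Filter.atTop (nhds 0) :=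
    ENNReal.tendsto_pow_atTop_nhds_zero_of_lt_one hr2
  have hev1 : ∀ᶠ k in Filter.atTop, ((2:ℝ≥0∞)^(-(s'-s)))^k * S < (η:ℝ≥0∞) :=
    hten.eventually_lt_const (by exact_mod_cast hη)
  have hev2 : ∀ᶠ k in Filter.atTop, ((2:ℝ≥0∞)^(-(1:ℝ)))^k < ENNReal.ofReal δ :=
    hten2.eventually_lt_const (by simp [ENNReal.ofReal_pos, hδ])
  obtain ⟨k, hk1, hk2⟩ := (hev1.and hev2).exists
  have hpowk : ∀ c : ℝ, ((2:ℝ≥0∞)^(-c))^k = (2:ℝ≥0∞)^(-(c*k)) := by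
    intro c
    rw [← ENNReal.rpow_natCast ((2:ℝ≥0∞)^(-c)) k, ← ENNReal.rpow_mul]
    ring_nf
  rw [hpowk] at hk1 hk2
  -- the cover
  set E' := {e : ℕ × ℕ × ℕ | e ∈ E ∧ k ≤ e.2.1 ∧ e.2.2 = p} with hE'
  set dec : ℕ → ℕ × ℕ × ℕ := fun m => (Denumerable.eqv (ℕ × ℕ × ℕ)).symm m with hdec
  set G : ℕ → Set X := fun m =>
    if dec m ∈ E' then BowenBall T (M.s (dec m).1) (dec m).2.1 ((2:ℝ)^(-(p:ℤ))) else ∅ with hG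
  have hGsize : ∀ m, esize T ε (G m) ≤
      (if dec m ∈ E' then (2:ℝ≥0∞)^(-(((dec m).2.1:ℕ):ℝ)) else 0) := by
    intro m
    rw [hG]
    by_cases hm : dec m ∈ E'
    · simp only [if_pos hm]
      exact esize_bowen hp
    · simp only [if_neg hm]
      rw [esize_empty]
  have hcond : (∀ n, IsOpen (G n)) ∧ (∀ n, esize T ε (G n) < ENNReal.ofReal δ) ∧
      Y ⊆ ⋃ n, G n := by
    refine ⟨fun m => ?_, fun m => ?_, fun y hy => ?_⟩
    · rw [hG]
      by_cases hm : dec m ∈ E'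
      · simp only [if_pos hm]; exact bowenBall_open hT _ _ _
      · simp only [if_neg hm]; exact isOpen_empty
    · refine lt_of_le_of_lt (hGsize m) ?_
      by_cases hm : dec m ∈ E'
      · simp only [if_pos hm]
        refine lt_of_le_of_lt (two_rpow_le ?_) hk2
        have := hm.2.1
        simp only [neg_le_neg_iff, one_mul]
        exact_mod_cast this
      · simp only [if_neg hm]
        simp [ENNReal.ofReal_pos, hδ]
    · obtain ⟨e, he, hye⟩ := Set.mem_iUnion₂.1 (hcov k p hy)
      refine Set.mem_iUnion.2 ⟨Denumerable.eqv (ℕ × ℕ × ℕ) e, ?_⟩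
      have hde : dec (Denumerable.eqv (ℕ × ℕ × ℕ) e) = e := by
        rw [hdec]; simp
      rw [hG]
      simp only [hde, if_pos (show e ∈ E' from he)]
      exact hye
  refine le_trans (iInf₂_le G hcond) ?_
  -- bound the sum
  have hterm : ∀ m, (esize T ε (G m)) ^ s' ≤
      (if dec m ∈ E' then (2:ℝ≥0∞)^(-(s' * ((dec m).2.1:ℝ))) else 0) := by
    intro m
    refine le_trans (ENNReal.rpow_le_rpow (hGsize m) hs'.le) ?_
    by_cases hm : dec m ∈ E'
    · simp only [if_pos hm]
      rw [← ENNReal.rpow_mul]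
      refine two_rpow_le ?_
      ring_nf
      exact le_refl _
    · simp only [if_neg hm]
      rw [ENNReal.zero_rpow_of_pos hs']
  refine le_trans (ENNReal.tsum_le_tsum hterm) ?_
  have hre : (∑' m : ℕ, (if dec m ∈ E' then (2:ℝ≥0∞)^(-(s' * ((dec m).2.1:ℝ))) else 0))
      = ∑' e : E', (2:ℝ≥0∞)^(-(s' * (((e:ℕ × ℕ × ℕ)).2.1:ℝ))) := by
    rw [tsum_subtype E' (fun e => (2:ℝ≥0∞)^(-(s' * ((e.2.1:ℕ):ℝ))))]
    rw [← Equiv.tsum_eq (Denumerable.eqv (ℕ × ℕ × ℕ)).symm]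
    congr 1
    funext m
    rw [Set.indicator_apply]
  rw [hre]
  have hterm2 : ∀ e : E', (2:ℝ≥0∞)^(-(s' * (((e:ℕ × ℕ × ℕ)).2.1:ℝ))) ≤
      (2:ℝ≥0∞)^(-((s'-s)*k)) * (2:ℝ≥0∞)^(-(s * (((e:ℕ × ℕ × ℕ)).2.1:ℝ))) := by
    rintro ⟨e, he⟩
    rw [← ENNReal.rpow_add _ _ (by norm_num) (by norm_num)]
    refine two_rpow_le ?_
    have hk : (k:ℝ) ≤ (e.2.1:ℝ) := by exact_mod_cast he.2.1
    nlinarith [sub_pos.2 hss']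
  refine le_trans (ENNReal.tsum_le_tsum hterm2) ?_
  rw [ENNReal.tsum_mul_left]
  have hsub : (∑' e : E', (2:ℝ≥0∞)^(-(s * (((e:ℕ × ℕ × ℕ)).2.1:ℝ)))) ≤ S := by
    rw [hS, tsum_subtype E' (fun e : ℕ × ℕ × ℕ => (2:ℝ≥0∞)^(-(s * ((e.2.1:ℕ):ℝ)))),
      tsum_subtype E (fun e : ℕ × ℕ × ℕ => (2:ℝ≥0∞)^(-(s * ((e.2.1:ℕ):ℝ))))]
    refine ENNReal.tsum_le_tsum fun e => ?_
    exact Set.indicator_le_indicator_of_subset (fun x hx => hx.1) (fun _ => zero_le) e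
  refine le_trans (mul_le_mul_right hsub _) hk1.le


lemma esize_le_one (T : X → X) (ε : ℝ) (E : Set X) : esize T ε E ≤ 1 := by
  have := esize_le T ε E (n := 0) (fun i hi => absurd hi (by omega))
  simpa using this

lemma geom_ne_top {a : ℝ} (ha : 0 < a) :
    (∑' n : ℕ, (2:ℝ≥0∞)^(-(a*(n:ℝ)))) ≠ ⊤ := by
  have hc : ∀ n : ℕ, (2:ℝ≥0∞)^(-(a*(n:ℝ))) = ((2:ℝ≥0∞)^(-a))^n := by
    intro n
    rw [← ENNReal.rpow_natCast ((2:ℝ≥0∞)^(-a)) n, ← ENNReal.rpow_mul]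
    ring_nf
  rw [tsum_congr hc, ENNReal.tsum_geometric]
  have hlt : (2:ℝ≥0∞)^(-a) < 1 := by
    have := two_rpow_lt (neg_lt_zero.2 ha)
    simpa using this
  exact ENNReal.inv_ne_top.2 (tsub_pos_of_lt hlt).ne'

lemma mS_anti {T : X → X} {Y : Set X} {ε : ℝ} {s₁ s₂ : ℝ} (h : s₁ ≤ s₂)
    (h0 : mS T Y s₁ ε = 0) : mS T Y s₂ ε = 0 := by
  rw [mS, ENNReal.iSup_eq_zero] at h0 ⊢
  intro δ
  rw [ENNReal.iSup_eq_zero]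
  intro hδ
  have h0δ := h0 δ
  rw [ENNReal.iSup_eq_zero] at h0δ
  have h0δ := h0δ hδ
  refine le_antisymm ?_ (zero_le)
  rw [← h0δ]
  refine le_iInf₂ fun G hG => ?_
  refine le_trans (iInf₂_le G hG) ?_
  refine ENNReal.tsum_le_tsum fun n => ?_
  exact ENNReal.rpow_le_rpow_of_exponent_ge (esize_le_one T ε (G n)) h

lemma exists_nullSCover (M : CMS X) (T : X → X) (hT : Continuous T) (Y : Set X)
    {s : ℝ≥0} (hs0 : 0 < s) (hmS : ∀ ε : ℝ, 0 < ε → mS T Y (s:ℝ) ε = 0) :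
    ∃ E : Set (ℕ × ℕ × ℕ), NullSCover M T Y (s:ℝ) E := by
  classical
  have hsR : (0:ℝ) < (s:ℝ) := hs0
  set ε : ℕ → ℝ := fun p => (2:ℝ)^(-(p:ℝ)-2) with hε
  have hεpos : ∀ p, 0 < ε p := fun p => Real.rpow_pos_of_pos two_pos _
  have key : ∀ p j : ℕ, ∃ G : ℕ → Set X,
      ((∀ n, IsOpen (G n)) ∧ (∀ n, esize T (ε p) (G n) < ENNReal.ofReal ((2:ℝ)^(-(j:ℝ)-1))) ∧
        Y ⊆ ⋃ n, G n) ∧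
      (∑' n : ℕ, esize T (ε p) (G n) ^ (s:ℝ)) < (2:ℝ≥0∞)^(-((p:ℝ)+(j:ℝ))) := by
    intro p j
    have h0 : mSD T Y (s:ℝ) (ε p) ((2:ℝ)^(-(j:ℝ)-1)) = 0 := by
      refine le_antisymm ?_ (zero_le)
      rw [← hmS (ε p) (hεpos p)]
      exact le_iSup₂ (f := fun δ (_ : 0 < δ) => mSD T Y (s:ℝ) (ε p) δ) _
        (Real.rpow_pos_of_pos two_pos _)
    have hlt : mSD T Y (s:ℝ) (ε p) ((2:ℝ)^(-(j:ℝ)-1)) < (2:ℝ≥0∞)^(-((p:ℝ)+(j:ℝ))) := by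
      rw [h0]; exact two_rpow_pos _
    rw [mSD] at hlt
    obtain ⟨G, hG⟩ := iInf_lt_iff.1 hlt
    obtain ⟨hc, hsum⟩ := iInf_lt_iff.1 hG
    exact ⟨G, hc, hsum⟩
  choose G hGc hGsum using key
  have key2 : ∀ p j n : ℕ, ∃ i m : ℕ, j ≤ m ∧
      G p j n ⊆ BowenBall T (M.s i) m ((2:ℝ)^(-(p:ℤ))) ∧
      (2:ℝ≥0∞)^(-((s:ℝ)*(m:ℝ))) ≤ esize T (ε p) (G p j n) ^ (s:ℝ) +
        (2:ℝ≥0∞)^(-((s:ℝ)*((n:ℝ)+(p:ℝ)+(j:ℝ)))) := by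
    intro p j n
    set g := G p j n with hg
    set V : Set ℕ := {m | ∀ i < m, EMetric.diam (T^[i] '' g) ≤ ENNReal.ofReal (ε p)} with hV
    have hVdc : ∀ {m m' : ℕ}, m ∈ V → m' ≤ m → m' ∈ V :=
      fun hm hle i hi => hm i (lt_of_lt_of_le hi hle)
    have hesize : esize T (ε p) g = ⨅ (m : ℕ) (_ : m ∈ V), (2:ℝ≥0∞)^(-(m:ℤ)) := rfl
    have hsz := (hGc p j).2.1 n
    rw [show ENNReal.ofReal ((2:ℝ)^(-(j:ℝ)-1)) = (2:ℝ≥0∞)^(-(j:ℝ)-1)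
      from (two_rpow_ofReal _).symm] at hsz
    rw [← hg, hesize] at hsz
    obtain ⟨m₀, hm₀⟩ := iInf_lt_iff.1 hsz
    obtain ⟨hm₀V, hm₀lt⟩ := iInf_lt_iff.1 hm₀
    have hjm₀ : j ≤ m₀ := by
      rw [two_zpow_eq] at hm₀lt
      have := two_rpow_lt_iff.1 hm₀lt
      push_cast at this
      have : (j:ℝ) < (m₀:ℝ) := by linarith
      exact_mod_cast this.le
    obtain ⟨m, hmV, hjmm, hbnd⟩ : ∃ m, m ∈ V ∧ j ≤ m ∧
        (2:ℝ≥0∞)^(-((s:ℝ)*(m:ℝ))) ≤ esize T (ε p) g ^ (s:ℝ) +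
          (2:ℝ≥0∞)^(-((s:ℝ)*((n:ℝ)+(p:ℝ)+(j:ℝ)))) := by
      by_cases hN : (n + p + j) ∈ V
      · refine ⟨n + p + j, hN, by omega, ?_⟩
        refine le_trans (le_of_eq ?_) le_add_self
        congr 2
        push_cast; ring
      · have hbdd : BddAbove V := ⟨n + p + j, fun m hm => by
          by_contra hc
          push_neg at hc
          exact hN (hVdc hm (by omega))⟩
        have hne : V.Nonempty := ⟨m₀, hm₀V⟩
        have hMV : sSup V ∈ V := Nat.sSup_mem hne hbdd
        refine ⟨sSup V, hMV, le_trans hjm₀ (le_csSup hbdd hm₀V), ?_⟩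
        have h1 : (2:ℝ≥0∞)^(-((sSup V : ℕ):ℝ)) ≤ esize T (ε p) g := by
          rw [hesize]
          refine le_iInf₂ fun m hm => ?_
          rw [two_zpow_eq]
          refine two_rpow_le ?_
          push_cast
          have := le_csSup hbdd hm
          have : (m:ℝ) ≤ ((sSup V : ℕ):ℝ) := by exact_mod_cast this
          linarith
        have h2 : (2:ℝ≥0∞)^(-((s:ℝ)*((sSup V : ℕ):ℝ))) ≤ esize T (ε p) g ^ (s:ℝ) := by
          calc (2:ℝ≥0∞)^(-((s:ℝ)*((sSup V : ℕ):ℝ)))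
              = ((2:ℝ≥0∞)^(-((sSup V : ℕ):ℝ)))^(s:ℝ) := by
                rw [← ENNReal.rpow_mul]; ring_nf
            _ ≤ _ := ENNReal.rpow_le_rpow h1 s.coe_nonneg
        exact le_trans h2 le_self_add
    by_cases hge : g.Nonempty
    · obtain ⟨x, hx⟩ := hge
      have hB : IsOpen (BowenBall T x m (ε p)) := bowenBall_open hT _ _ _
      have hBne : (BowenBall T x m (ε p)).Nonempty :=
        ⟨x, fun i _ => by simpa using hεpos p⟩
      obtain ⟨i₀, hi₀⟩ := M.dense.exists_mem_open hB hBne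
      refine ⟨i₀, m, hjmm, ?_, hbnd⟩
      intro y hyg
      intro i hi
      have hd1 : dist (T^[i] (M.s i₀)) (T^[i] x) < ε p := by
        have := hi₀ i hi
        rwa [dist_comm] at this
      have hd2 : dist (T^[i] x) (T^[i] y) ≤ ε p := by
        have hdiam := hmV i hi
        have hedist : edist (T^[i] x) (T^[i] y) ≤ ENNReal.ofReal (ε p) :=
          le_trans (EMetric.edist_le_diam_of_mem (Set.mem_image_of_mem _ hx)
            (Set.mem_image_of_mem _ hyg)) hdiam
        rw [edist_dist] at hedist
        exact (ENNReal.ofReal_le_ofReal_iff (hεpos p).le).1 hedist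
      have htri : dist (T^[i] (M.s i₀)) (T^[i] y) ≤
          dist (T^[i] (M.s i₀)) (T^[i] x) + dist (T^[i] x) (T^[i] y) := dist_triangle _ _ _
      have hlast : ε p + ε p ≤ (2:ℝ)^(-(p:ℤ)) := by
        have hz : (2:ℝ)^(-(p:ℤ)) = (2:ℝ)^(-(p:ℝ)) := by
          rw [← Real.rpow_intCast]
          push_cast
          ring_nf
        rw [hz, hε]
        have h4 : (2:ℝ)^(-(p:ℝ)-2) = (2:ℝ)^(-(p:ℝ)) / 4 := by
          rw [Real.rpow_sub two_pos]
          norm_num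
        simp only [h4]
        have := Real.rpow_pos_of_pos two_pos (-(p:ℝ))
        linarith
      calc dist (T^[i] (M.s i₀)) (T^[i] y) ≤ _ := htri
        _ < ε p + ε p := add_lt_add_of_lt_of_le hd1 hd2
        _ ≤ _ := hlast
    · refine ⟨0, m, hjmm, ?_, hbnd⟩
      intro y hyg
      exact absurd ⟨y, hyg⟩ hge
  choose I Mm hjm hsub hbound using key2
  set F : ℕ × ℕ × ℕ → ℕ × ℕ × ℕ := fun q => (I q.1 q.2.1 q.2.2, Mm q.1 q.2.1 q.2.2, q.1) with hF
  refine ⟨Set.range F, ?_, ?_⟩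
  · -- the sum is finite
    set C := ∑' n : ℕ, (2:ℝ≥0∞)^(-((s:ℝ)*(n:ℝ))) with hCdef
    have hC : C ≠ ⊤ := geom_ne_top hsR
    have hD : (∑' n : ℕ, (2:ℝ≥0∞)^(-(n:ℝ))) ≠ ⊤ := by
      have : ∀ n : ℕ, (2:ℝ≥0∞)^(-(n:ℝ)) = (2:ℝ≥0∞)^(-(1*(n:ℝ))) := by intro n; norm_num
      rw [tsum_congr this]
      exact geom_ne_top one_pos
    set D := ∑' n : ℕ, (2:ℝ≥0∞)^(-(n:ℝ)) with hDdef
    have hι : ∀ e : Set.range F, ∃ q, F q = (e : ℕ × ℕ × ℕ) := fun e => e.2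
    choose ι hιs using hι
    have hinj : Function.Injective ι := by
      intro a b hab
      apply Subtype.ext
      rw [← hιs a, ← hιs b, hab]
    have h1 : (∑' e : Set.range F, (2:ℝ≥0∞) ^ (-((s:ℝ) * (((e : ℕ × ℕ × ℕ)).2.1 : ℝ)))) ≤
        ∑' q : ℕ × ℕ × ℕ, (2:ℝ≥0∞) ^ (-((s:ℝ) * (((F q).2.1 : ℕ) : ℝ))) := by
      refine le_trans (le_of_eq (tsum_congr fun e => ?_))
        (ENNReal.tsum_comp_le_tsum_of_injective hinj
          (fun q => (2:ℝ≥0∞) ^ (-((s:ℝ) * (((F q).2.1 : ℕ) : ℝ)))))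
      rw [hιs e]
    have h3 : (∑' q : ℕ × ℕ × ℕ, (2:ℝ≥0∞) ^ (-((s:ℝ) * (((F q).2.1 : ℕ) : ℝ)))) ≤
        ∑' p : ℕ, ∑' j : ℕ, ((2:ℝ≥0∞)^(-((p:ℝ)+(j:ℝ))) +
          (2:ℝ≥0∞)^(-((s:ℝ)*((p:ℝ)+(j:ℝ)))) * C) := by
      rw [ENNReal.tsum_prod']
      refine ENNReal.tsum_le_tsum fun p => ?_
      rw [ENNReal.tsum_prod']
      refine ENNReal.tsum_le_tsum fun j => ?_
      refine le_trans (ENNReal.tsum_le_tsum fun n => hbound p j n) ?_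
      rw [ENNReal.tsum_add]
      refine add_le_add (le_of_lt (hGsum p j)) ?_
      have hsplit : ∀ n : ℕ, (2:ℝ≥0∞)^(-((s:ℝ)*((n:ℝ)+(p:ℝ)+(j:ℝ)))) =
          (2:ℝ≥0∞)^(-((s:ℝ)*((p:ℝ)+(j:ℝ)))) * (2:ℝ≥0∞)^(-((s:ℝ)*(n:ℝ))) := by
        intro n
        rw [← ENNReal.rpow_add _ _ (by norm_num) (by norm_num)]
        congr 1; ring
      rw [tsum_congr hsplit, ENNReal.tsum_mul_left]
    have h4 : (∑' p : ℕ, ∑' j : ℕ, ((2:ℝ≥0∞)^(-((p:ℝ)+(j:ℝ))) +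
        (2:ℝ≥0∞)^(-((s:ℝ)*((p:ℝ)+(j:ℝ)))) * C)) ≠ ⊤ := by
      have heq : ∀ p : ℕ, (∑' j : ℕ, ((2:ℝ≥0∞)^(-((p:ℝ)+(j:ℝ))) +
          (2:ℝ≥0∞)^(-((s:ℝ)*((p:ℝ)+(j:ℝ)))) * C)) =
          (2:ℝ≥0∞)^(-(p:ℝ)) * D + (2:ℝ≥0∞)^(-((s:ℝ)*(p:ℝ))) * (C * C) := by
        intro p
        rw [ENNReal.tsum_add]
        congr 1
        · have : ∀ j : ℕ, (2:ℝ≥0∞)^(-((p:ℝ)+(j:ℝ))) =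
              (2:ℝ≥0∞)^(-(p:ℝ)) * (2:ℝ≥0∞)^(-(j:ℝ)) := by
            intro j
            rw [← ENNReal.rpow_add _ _ (by norm_num) (by norm_num)]
            congr 1; ring
          rw [tsum_congr this, ENNReal.tsum_mul_left]
        · have : ∀ j : ℕ, (2:ℝ≥0∞)^(-((s:ℝ)*((p:ℝ)+(j:ℝ)))) * C =
              (2:ℝ≥0∞)^(-((s:ℝ)*(p:ℝ))) * ((2:ℝ≥0∞)^(-((s:ℝ)*(j:ℝ))) * C) := by
            intro j
            rw [← mul_assoc, ← ENNReal.rpow_add _ _ (by norm_num) (by norm_num)]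
            congr 2; ring
          rw [tsum_congr this, ENNReal.tsum_mul_left, ENNReal.tsum_mul_right, hCdef]
      rw [tsum_congr heq, ENNReal.tsum_add]
      refine ENNReal.add_ne_top.2 ⟨?_, ?_⟩
      · rw [ENNReal.tsum_mul_right]
        exact ENNReal.mul_ne_top hD hD
      · rw [ENNReal.tsum_mul_right]
        exact ENNReal.mul_ne_top (geom_ne_top hsR) (ENNReal.mul_ne_top hC hC)
    exact ne_top_of_le_ne_top h4 (le_trans h1 h3)
  · -- covering
    intro k p y hy
    obtain ⟨n, hn⟩ := Set.mem_iUnion.1 ((hGc p k).2.2 hy)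
    refine Set.mem_iUnion₂.2 ⟨F (p, k, n), ⟨Set.mem_range_self _, hjm p k n, rfl⟩, ?_⟩
    exact hsub p k n hn

end Aux

/-- Characterization of the dimension-like topological entropy via null
`s`-covers: `h₂(T,Y) = inf{s ≥ 0 : Y has a null s-cover}`. -/
theorem stmt_13 {X : Type*} [MetricSpace X] [CompleteSpace X]
    (M : CMS X) (T : X → X) (hT : Continuous T) (Y : Set X) :
    h2 T Y = sInf {c : ℝ≥0∞ | ∃ s : ℝ≥0, c = (s : ℝ≥0∞) ∧
      ∃ E : Set (ℕ × ℕ × ℕ), NullSCover M T Y (s:ℝ) E} := by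
  apply le_antisymm
  · refine le_sInf fun c hc => ?_
    obtain ⟨s, rfl, E, hE⟩ := hc
    refine ENNReal.le_of_forall_pos_le_add fun η hη _ => ?_
    rw [← ENNReal.coe_add, h2]
    refine iSup₂_le fun ε hε => ?_
    refine sInf_le ⟨s + η, rfl, ?_⟩
    refine mS_eq_zero_of_cover M T hT Y s.coe_nonneg hE.1 hE.2 ?_ hε
    push_cast
    have : (0:ℝ) < (η:ℝ) := hη
    linarith
  · refine le_of_forall_gt_imp_ge_of_dense fun t ht => ?_
    obtain ⟨s, hs1, hs2⟩ := ENNReal.lt_iff_exists_nnreal_btwn.1 ht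
    have hs0 : 0 < s := by
      rcases eq_or_lt_of_le (zero_le (a := s)) with h | h
      · exfalso
        rw [← h] at hs1
        simp at hs1
      · exact h
    have hmS : ∀ ε : ℝ, 0 < ε → mS T Y (s:ℝ) ε = 0 := by
      intro ε hε
      have hle : sInf {c : ℝ≥0∞ | ∃ u : ℝ≥0, c = (u : ℝ≥0∞) ∧ mS T Y (u:ℝ) ε = 0} ≤
          h2 T Y := by
        rw [h2]
        exact le_iSup₂ (f := fun ε (_ : 0 < ε) =>
          sInf {c : ℝ≥0∞ | ∃ u : ℝ≥0, c = (u:ℝ≥0∞) ∧ mS T Y (u:ℝ) ε = 0}) ε hε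
      obtain ⟨c, ⟨u, rfl, hmu⟩, hcu⟩ := sInf_lt_iff.1 (lt_of_le_of_lt hle hs1)
      exact mS_anti (by exact_mod_cast hcu.le) hmu
    obtain ⟨E, hE⟩ := exists_nullSCover M T hT Y hs0 hmS
    exact le_trans (sInf_le ⟨s, rfl, E, hE⟩) hs2.le
end

section
/- Let (X,d) be a separable metric space, μ and (μ_n)_{n∈ℕ} Borel probability measures on X, and A a countable basis of the topology of X which is closed under finite unions. If μ_n(A) → μ(A) as n→∞ for every A∈A, then μ_n converges weakly to μ, i.e. ∫ f dμ_n → ∫ f dμ for every bounded continuous real-valued function f on X. -/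
open MeasureTheory Filter Set Metric Topology
open scoped ENNReal NNReal

/-- Portmanteau-type criterion for weak convergence.
If the measures of the members of a countable topological basis closed under finite unions
converge, then the measures converge weakly. -/
theorem stmt_19 {X : Type*} [MetricSpace X] [TopologicalSpace.SeparableSpace X]
    [MeasurableSpace X] [BorelSpace X]
    (μ : MeasureTheory.Measure X) (μs : ℕ → MeasureTheory.Measure X)
    [MeasureTheory.IsProbabilityMeasure μ]
    [∀ n, MeasureTheory.IsProbabilityMeasure (μs n)]
    (𝒜 : Set (Set X)) (hcount : 𝒜.Countable)
    (hbasis : TopologicalSpace.IsTopologicalBasis 𝒜)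
    (hunion : ∀ A ∈ 𝒜, ∀ B ∈ 𝒜, A ∪ B ∈ 𝒜)
    (hconv : ∀ A ∈ 𝒜,
      Filter.Tendsto (fun n : ℕ => ((μs n) A).toReal) Filter.atTop
        (nhds ((μ A).toReal))) :
    ∀ f : X → ℝ, Continuous f → (∃ C : ℝ, ∀ x : X, |f x| ≤ C) →
      Filter.Tendsto (fun n : ℕ => ∫ x, f x ∂(μs n)) Filter.atTop
        (nhds (∫ x, f x ∂μ)) := by
  
  -- Step 1: liminf condition for basis elements contained in an open set
  have key : ∀ G : Set X, IsOpen G → ∀ A ∈ 𝒜, A ⊆ G →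
      (μ A).toReal ≤ atTop.liminf (fun n => ((μs n) G).toReal) := by
    intro G hG A hA hAG
    have hlim : atTop.liminf (fun n => ((μs n) A).toReal) = (μ A).toReal :=
      (hconv A hA).liminf_eq
    rw [← hlim]
    have hbA : IsBoundedUnder (· ≥ ·) atTop (fun n => ((μs n) A).toReal) :=
      isBoundedUnder_of ⟨0, fun n => ENNReal.toReal_nonneg⟩
    have hbG : IsBoundedUnder (· ≤ ·) atTop (fun n => ((μs n) G).toReal) :=
      isBoundedUnder_of ⟨1, fun n => by
        simpa using ENNReal.toReal_mono ENNReal.one_ne_top prob_le_one⟩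
    exact liminf_le_liminf
      (Eventually.of_forall fun n =>
        ENNReal.toReal_mono (measure_ne_top _ _) (measure_mono hAG))
      hbA hbG.isCoboundedUnder_ge
  -- Step 2: liminf condition for all open sets
  have h_opens : ∀ G, IsOpen G → μ G ≤ atTop.liminf (fun n => (μs n) G) := by
    intro G hG
    have hGU : G = ⋃₀ {s ∈ 𝒜 | s ⊆ G} := hbasis.open_eq_sUnion' hG
    set S := {s ∈ 𝒜 | s ⊆ G} with hS
    rcases S.eq_empty_or_nonempty with hSe | hSne
    · rw [hGU, hSe]; simp
    · obtain ⟨e, he⟩ := (hcount.mono (fun s hs => hs.1)).exists_eq_range hSne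
      have heS : ∀ i, e i ∈ S := fun i => he ▸ mem_range_self i
      -- accumulated finite unions
      set F : ℕ → Set X := Set.accumulate e with hF
      have hFA : ∀ k, F k ∈ 𝒜 := by
        intro k
        induction k with
        | zero => simpa [hF, Set.accumulate] using (heS 0).1
        | succ k ih =>
            have : F (k+1) = F k ∪ e (k+1) := by
              ext x
              simp only [hF, Set.mem_accumulate, Nat.le_succ_iff, mem_union]
              constructor
              · rintro ⟨i, hi | hi, hx⟩
                · exact Or.inl ⟨i, hi, hx⟩
                · exact Or.inr (by subst hi; exact hx)
              · rintro (⟨i, hi, hx⟩ | hx)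
                · exact ⟨i, Or.inl hi, hx⟩
                · exact ⟨k+1, Or.inr rfl, hx⟩
            rw [this]
            exact hunion _ ih _ (heS (k+1)).1
      have hFG : ∀ k, F k ⊆ G := by
        intro k x hx
        rw [hF, Set.mem_accumulate] at hx
        obtain ⟨i, _, hx⟩ := hx
        exact (heS i).2 hx
      have hFU : ⋃ k, F k = G := by
        rw [hF, Set.iUnion_accumulate, ← Set.sUnion_range e, ← he]; exact hGU.symm
      -- the liminf (in ℝ≥0∞) is finite and its toReal is the real liminf
      have hbd : ∀ᶠ n in atTop, (μs n) G ≤ 1 :=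
        Eventually.of_forall fun n => prob_le_one
      have hliminf_le : atTop.liminf (fun n => (μs n) G) ≤ 1 := by
        apply liminf_le_of_le ⟨0, by simp⟩
        intro y h
        obtain ⟨n, hn⟩ := (h.and hbd).exists
        exact hn.1.trans hn.2
      have htoReal : atTop.liminf (fun n => ((μs n) G).toReal)
          = (atTop.liminf (fun n => (μs n) G)).toReal :=
        ENNReal.liminf_toReal_eq ENNReal.one_ne_top hbd
      -- μ G = ⨆ μ (F k)
      have hsup : μ G = ⨆ k, μ (F k) := by
        rw [← hFU]
        exact (Set.monotone_accumulate.directed_le).measure_iUnion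
      rw [hsup]
      refine iSup_le fun k => ?_
      have h1 := key G hG (F k) (hFA k) (hFG k)
      rw [htoReal] at h1
      have hne : atTop.liminf (fun n => (μs n) G) ≠ ⊤ :=
        (hliminf_le.trans_lt ENNReal.one_lt_top).ne
      exact (ENNReal.toReal_le_toReal (measure_ne_top _ _) hne).mp h1
  -- Step 3: conclude weak convergence
  intro f hf ⟨C, hC⟩
  let g : BoundedContinuousFunction X ℝ :=
    BoundedContinuousFunction.ofNormedAddCommGroup f hf C (fun x => by
      simpa [Real.norm_eq_abs] using hC x)
  have : ∀ x, f x = g x := fun x => rfl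
  simp only [this]
  exact BoundedContinuousFunction.tendsto_integral_of_forall_integral_le_liminf_integral
    (fun φ φ_nn =>
      integral_le_liminf_integral_of_forall_isOpen_measure_le_liminf_measure φ_nn h_opens) g
end
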